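/- With G' constructed from G as in Ramalingam's streamlined transformation (delete all back arcs; for each u such that loop(u) and loop(h(u)) share a common non-head entry add arc (p(h(u)), u); for each non-head entry (v, w) add arc (v, u) where loop(u) is the largest loop entered by (v, w)), the graphs G and G' have exactly the same dominator relation: for all vertices x, y, x dominates y in G if and only if x dominates y in G'. -/

import Mathlib

universe u

variable {V : Type u}

attribute [local instance] Classical.propDecidable

/-- A flow graph: a directed graph with arc relation `A` and start vertex `s`. -/
structure FlowGraph (V : Type u) where
  A : V → V → Prop
  s : V

namespace FlowGraph

/-- `p` is a (directed) path from `a` to `b`: a nonempty list of vertices starting at `a`,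
ending at `b`, with consecutive vertices joined by arcs. -/
def IsPath (G : FlowGraph V) (p : List V) (a b : V) : Prop :=
  p ≠ [] ∧ p.head? = some a ∧ p.getLast? = some b ∧ p.Chain' G.A

def Reach (G : FlowGraph V) (a b : V) : Prop := ∃ p, G.IsPath p a b

/-- `u` dominates `v`: every path from the start vertex `s` to `v` contains `u`. -/
def Dom (G : FlowGraph V) (u v : V) : Prop :=
  ∀ p, G.IsPath p G.s v → u ∈ p

/-- Acyclic: no cycle of more than one vertex, i.e. no two distinct mutually reachable
vertices. -/
def Acyclic (G : FlowGraph V) : Prop :=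
  ∀ a b, a ≠ b → ¬ (G.Reach a b ∧ G.Reach b a)

/-- A spanning tree of `G` rooted at `s`, given by a parent function: every non-root
vertex has a tree arc from its parent, and the parent chain of every vertex reaches `s`. -/
structure SpanningTree (G : FlowGraph V) where
  parent : V → V
  parent_arc : ∀ v, v ≠ G.s → G.A (parent v) v
  parent_root : parent G.s = G.s
  root_reach : ∀ v, Relation.ReflTransGen (fun a b => parent a = b) v G.s

/-- `u` is an ancestor of `v` in the tree `T` (reflexively). -/
def Anc {G : FlowGraph V} (T : SpanningTree G) (u v : V) : Prop :=
  Relation.ReflTransGen (fun a b => T.parent a = b) v u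

/-- Replace occurrences of `v` by `x`. -/
noncomputable def repl (v x a : V) : V := if a = v then x else a

/-- Contraction of vertex `v` into vertex `x`: every arc end equal to `v` is replaced by `x`. -/
noncomputable def contract (G : FlowGraph V) (v x : V) : FlowGraph V where
  A a b := ∃ a' b', G.A a' b' ∧ a = repl v x a' ∧ b = repl v x b'
  s := G.s

/-- `x ∈ loop(u)`: `x` is a descendant of `u` in `T` with a path from `x` to `u` in `G`
containing only descendants of `u` in `T`. -/
def InLoop (G : FlowGraph V) (T : SpanningTree G) (u x : V) : Prop :=
  Anc T u x ∧ ∃ p, G.IsPath p x u ∧ ∀ y ∈ p, Anc T u y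

/-- `d` is an immediate-dominator function for `G`: for each `v ≠ s`, `d v ≠ v` is a
dominator of `v` and every dominator of `v` other than `v` itself dominates `d v`. -/
def IsIdom (G : FlowGraph V) (d : V → V) : Prop :=
  ∀ v, v ≠ G.s → d v ≠ v ∧ G.Dom (d v) v ∧
    ∀ u, G.Dom u v → u ≠ v → G.Dom u (d v)

end FlowGraph

open FlowGraph

/-- `(v, w)` is an entry to `loop(u)`: an arc with `w ∈ loop(u)` and `v ∉ loop(u)`. -/
def IsEntry (G : FlowGraph V) (T : SpanningTree G) (u v w : V) : Prop :=
  G.A v w ∧ InLoop G T u w ∧ ¬ InLoop G T u v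

/-- Ramalingam's streamlined transformation: delete all back arcs; for each `u` such
that `loop(u)` and `loop(h(u))` have a common non-head entry `(v, w)`, add arc
`(p (h u), u)`; and for each non-head entry `(v, w)` into some loop, add arc `(v, u)`
where `loop(u)` is the largest loop with entry `(v, w)`. -/
def ramalingam (G : FlowGraph V) (T : SpanningTree G) (h : V → Option V) : FlowGraph V where
  A a b :=
    (G.A a b ∧ ¬ (Anc T b a ∧ a ≠ b)) ∨
    (∃ hu v w, h b = some hu ∧ a = T.parent hu ∧
      IsEntry G T b v w ∧ w ≠ b ∧ IsEntry G T hu v w ∧ w ≠ hu) ∨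
    (∃ w, (∃ u0, IsEntry G T u0 a w ∧ w ≠ u0) ∧ IsEntry G T b a w ∧
      ∀ u', IsEntry G T u' a w → ∀ x, InLoop G T u' x → InLoop G T b x)
  s := G.s

section PathAPI

variable {G : FlowGraph V} {p q r : List V} {a b c d y : V}

lemma FlowGraph.IsPath.ne_nil (hp : G.IsPath p a b) : p ≠ [] := hp.1

lemma FlowGraph.IsPath.head_mem (hp : G.IsPath p a b) : a ∈ p :=
  List.mem_of_mem_head? hp.2.1

lemma FlowGraph.IsPath.last_mem (hp : G.IsPath p a b) : b ∈ p :=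
  List.mem_of_mem_getLast? hp.2.2.1

lemma isPath_single (a : V) : G.IsPath [a] a a :=
  ⟨by simp, rfl, rfl, List.isChain_singleton a⟩

lemma isPath_append (h₁ : G.IsPath p a b) (h₂ : G.IsPath q c d) (hbc : G.A b c) :
    G.IsPath (p ++ q) a d := by
  obtain ⟨hn1, hh1, hl1, hc1⟩ := h₁
  obtain ⟨hn2, hh2, hl2, hc2⟩ := h₂
  refine ⟨by simp [hn1], ?_, ?_, ?_⟩
  · rwa [List.head?_append_of_ne_nil _ hn1]
  · rwa [List.getLast?_append_of_ne_nil _ hn2]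
  · refine List.isChain_append.mpr ?_
    refine ⟨hc1, hc2, ?_⟩
    intro x hx y hy
    rw [hl1] at hx; rw [hh2] at hy
    cases hx; cases hy; exact hbc

lemma isPath_concat (h₁ : G.IsPath p a b) (hbc : G.A b c) : G.IsPath (p ++ [c]) a c :=
  isPath_append h₁ (isPath_single c) hbc

lemma isPath_join (h₁ : G.IsPath p a b) (h₂ : G.IsPath q b c) :
    G.IsPath (p ++ q.tail) a c := by
  obtain ⟨hn2, hh2, hl2, hc2⟩ := h₂
  match q, hn2 with
  | [b'], _ =>
    cases hh2
    simp only [List.getLast?_singleton, Option.some.injEq] at hl2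
    subst hl2; simpa using h₁
  | b' :: e :: q', _ =>
    cases hh2
    refine isPath_append h₁ (q := e :: q') ⟨by simp, rfl, ?_, hc2.tail⟩ ?_
    · rw [← hl2]; simp [List.getLast?_cons_cons]
    · exact (List.isChain_cons_cons.mp hc2).1

lemma exists_last_arc (hp : G.IsPath p a b) (h2 : 2 ≤ p.length) :
    ∃ q c, p = q ++ [b] ∧ G.IsPath q a c ∧ G.A c b := by
  obtain ⟨hn, hh, hl, hc⟩ := hp
  have hb : p.getLast hn = b := by
    have := List.getLast?_eq_getLast hn
    rw [hl] at this; exact (Option.some.injEq _ _ ▸ this.symm)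
  have hsplit : p = p.dropLast ++ [b] := by
    rw [← hb]; exact (List.dropLast_append_getLast hn).symm
  have hq : p.dropLast ≠ [] := by
    intro he
    rw [hsplit, he] at h2; simp at h2
  refine ⟨p.dropLast, p.dropLast.getLast hq, hsplit, ⟨hq, ?_, List.getLast?_eq_getLast hq, ?_⟩, ?_⟩
  · rw [hsplit] at hh; rwa [List.head?_append_of_ne_nil _ hq] at hh
  · rw [hsplit] at hc; exact (List.isChain_append.mp hc).1
  · rw [hsplit] at hc
    have := (List.isChain_append.mp hc).2.2
    exact this _ (List.getLast?_eq_getLast hq) b rfl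

lemma isPath_suffix (hp : G.IsPath p a b) (hy : y ∈ p) :
    ∃ r, G.IsPath r y b ∧ ∀ c ∈ r, c ∈ p := by
  induction p generalizing a with
  | nil => cases hy
  | cons hd tl ih =>
    obtain ⟨hn, hh, hl, hc⟩ := hp
    cases hh
    rcases List.mem_cons.mp hy with he | hm
    · subst he; exact ⟨y :: tl, ⟨hn, rfl, hl, hc⟩, fun c hcm => hcm⟩
    · have htn : tl ≠ [] := by rintro rfl; cases hm
      have htp : G.IsPath tl (tl.head htn) b := by
        refine ⟨htn, List.head?_eq_head htn, ?_, hc.tail⟩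
        obtain ⟨t0, tl', rfl⟩ := List.exists_cons_of_ne_nil htn
        simpa [List.getLast?_cons_cons] using hl
      obtain ⟨r, hr, hsub⟩ := ih htp hm
      exact ⟨r, hr, fun c hcm => List.mem_cons_of_mem _ (hsub c hcm)⟩

lemma exists_crossing (L : V → Prop) :
    ∀ n (p : List V) (a b : V), p.length ≤ n → G.IsPath p a b → ¬ L a → L b →
    ∃ q r v w, p = q ++ r ∧ G.IsPath q a v ∧ G.IsPath r w b ∧ G.A v w ∧ ¬ L v ∧ ∀ y ∈ r, L y := by
  intro n
  induction n with
  | zero => intro p a b hlen hp _ _; exact absurd (List.length_eq_zero_iff.mp (Nat.le_zero.mp hlen)) hp.1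
  | succ n ih =>
    intro p a b hlen hp hna hb
    rcases Nat.lt_or_ge p.length 2 with h2 | h2
    · -- p = [a] = [b]: contradiction
      obtain ⟨hn, hh, hl, _⟩ := hp
      match p, hn with
      | [c], _ =>
        cases hh
        simp only [List.getLast?_singleton, Option.some.injEq] at hl
        subst hl; exact absurd hb hna
      | c₁ :: c₂ :: p', _ => simp at h2
    · obtain ⟨q₀, c, hsplit, hq₀, harc⟩ := exists_last_arc hp h2
      by_cases hLc : L c
      · have hlen0 : q₀.length ≤ n := by
          have := congrArg List.length hsplit
          simp at this; omega
        obtain ⟨q, r, v, w, hsp, hqp, hrp, ha, hnv, hall⟩ := ih q₀ a c hlen0 hq₀ hna hLc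
        refine ⟨q, r ++ [b], v, w, ?_, hqp, isPath_concat hrp harc, ha, hnv, ?_⟩
        · rw [hsplit, hsp, List.append_assoc]
        · intro y hy
          rcases List.mem_append.mp hy with h | h
          · exact hall y h
          · simp at h; subst h; exact hb
      · exact ⟨q₀, [b], c, b, hsplit, hq₀, isPath_single b, harc, hLc, by simpa using hb⟩

section TreeAPI

variable {G : FlowGraph V} {T : SpanningTree G} {h : V → Option V} {a b c u y z x : V}

lemma anc_refl : Anc T a a := Relation.ReflTransGen.refl

lemma anc_trans (h1 : Anc T a b) (h2 : Anc T b c) : Anc T a c := h2.trans h1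

lemma anc_parent : Anc T (T.parent b) b := Relation.ReflTransGen.single rfl

lemma anc_s : Anc T G.s a := T.root_reach a

section Lin
variable [LinearOrder V]

lemma anc_antisymm (hanc : ∀ a b, Anc T a b → b ≤ a) (h1 : Anc T a b) (h2 : Anc T b a) :
    a = b := le_antisymm (hanc b a h2) (hanc a b h1)

lemma eq_s_of_anc_s (hanc : ∀ a b, Anc T a b → b ≤ a) (h1 : Anc T a G.s) : a = G.s :=
  anc_antisymm hanc h1 anc_s

end Lin

lemma parent_fix_eq_s (hx : T.parent x = x) : x = G.s := by
  have aux : ∀ {a b : V}, Relation.ReflTransGen (fun c d => T.parent c = d) a b →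
      T.parent a = a → b = a := by
    intro a b hab
    induction hab using Relation.ReflTransGen.head_induction_on with
    | refl => intro _; rfl
    | @head a' c hstep _ ih =>
      intro hfix
      rw [hfix] at hstep
      subst hstep
      exact ih hfix
  exact (aux (T.root_reach x) hx).symm

lemma anc_comparable (h1 : Anc T a y) (h2 : Anc T b y) : Anc T a b ∨ Anc T b a := by
  unfold Anc at *
  induction h1 using Relation.ReflTransGen.head_induction_on generalizing b with
  | refl => exact Or.inr h2
  | @head y' c hstep htail ih =>
    rcases Relation.ReflTransGen.cases_head h2 with he | ⟨c', hstep', htail'⟩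
    · subst he
      exact Or.inl (Relation.ReflTransGen.head hstep htail)
    · rw [hstep] at hstep'
      subst hstep'
      exact ih htail'

lemma anc_parent_of_ne (hab : Anc T a b) (hne : a ≠ b) : Anc T a (T.parent b) := by
  rcases Relation.ReflTransGen.cases_head hab with he | ⟨c, hstep, htail⟩
  · exact absurd he.symm hne
  · rwa [hstep]

lemma anc_iff_iterate : Anc T u z ↔ ∃ n, T.parent^[n] z = u := by
  constructor
  · intro hz
    induction hz with
    | refl => exact ⟨0, rfl⟩
    | tail _ hstep ih =>
      obtain ⟨n, hn⟩ := ih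
      exact ⟨n + 1, by rw [Function.iterate_succ_apply', hn, hstep]⟩
  · rintro ⟨n, hn⟩
    induction n generalizing z with
    | zero => exact hn ▸ Relation.ReflTransGen.refl
    | succ n ih =>
      rw [Function.iterate_succ_apply] at hn
      exact Relation.ReflTransGen.head rfl (ih hn)

lemma tree_path [LinearOrder V] (hanc : ∀ a b, Anc T a b → b ≤ a) (huy : Anc T u y) :
    ∃ l, G.IsPath l u y ∧ (ramalingam G T h).IsPath l u y ∧
      (∀ c ∈ l, Anc T u c ∧ Anc T c y) ∧ (∀ c, Anc T c y → Anc T u c → c ∈ l) := by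
  induction huy using Relation.ReflTransGen.head_induction_on with
  | refl =>
    refine ⟨[u], isPath_single u, isPath_single u, ?_, ?_⟩
    · intro c hc; simp at hc; subst hc; exact ⟨anc_refl, anc_refl⟩
    · intro c h1 h2; simp [anc_antisymm hanc h1 h2]
  | @head y' c hstep htail ih =>
    by_cases hys : y' = G.s
    · subst hys
      rw [T.parent_root] at hstep
      subst hstep
      have hus : u = G.s := eq_s_of_anc_s hanc htail
      subst hus
      refine ⟨[G.s], isPath_single _, isPath_single _, ?_, ?_⟩
      · intro c hc; simp at hc; subst hc; exact ⟨anc_refl, anc_refl⟩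
      · intro c h1 _; simp [eq_s_of_anc_s hanc h1]
    · obtain ⟨l, hg, hg', hprops, hcont⟩ := ih
      have harc : G.A c y' := hstep ▸ T.parent_arc y' hys
      have hcy : Anc T c y' := hstep ▸ anc_parent
      have harc' : (ramalingam G T h).A c y' := by
        refine Or.inl ⟨harc, ?_⟩
        rintro ⟨h1, h2⟩
        exact h2 (anc_antisymm hanc hcy h1)
      refine ⟨l ++ [y'], isPath_concat hg harc, isPath_concat hg' harc', ?_, ?_⟩
      · intro c' hc'
        rcases List.mem_append.mp hc' with hm | hm
        · exact ⟨(hprops c' hm).1, anc_trans (hprops c' hm).2 hcy⟩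
        · simp at hm; subst hm
          exact ⟨Relation.ReflTransGen.head hstep htail, anc_refl⟩
      · intro c₀ h1 h2
        rcases Relation.ReflTransGen.cases_head h1 with he | ⟨c₂, hstep', htail'⟩
        · subst he; simp
        · rw [hstep] at hstep'
          subst hstep'
          exact List.mem_append.mpr (Or.inl (hcont c₀ htail' h2))

end TreeAPI

section LoopAPI

variable {G : FlowGraph V} {T : SpanningTree G} {h : V → Option V} {u u' v w y z t x : V}

lemma inLoop_self : InLoop G T u u :=
  ⟨anc_refl, [u], isPath_single u, by intro y hy; simp at hy; subst hy; exact anc_refl⟩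

lemma loop_witness (hx : InLoop G T u w) :
    ∃ p, G.IsPath p w u ∧ ∀ y ∈ p, InLoop G T u y := by
  obtain ⟨hancw, p, hp, hall⟩ := hx
  refine ⟨p, hp, ?_⟩
  intro y hy
  obtain ⟨r, hr, hsub⟩ := isPath_suffix hp hy
  exact ⟨hall y hy, r, hr, fun c hc => hall c (hsub c hc)⟩

lemma inLoop_trans (h1 : InLoop G T u u') (h2 : InLoop G T u' y) : InLoop G T u y := by
  obtain ⟨hau', p, hp, hallp⟩ := h1
  obtain ⟨hay, q, hq, hallq⟩ := h2
  refine ⟨anc_trans hau' hay, q ++ p.tail, isPath_join hq hp, ?_⟩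
  intro c hc
  rcases List.mem_append.mp hc with hm | hm
  · exact anc_trans hau' (hallq c hm)
  · exact hallp c (List.mem_of_mem_tail hm)

lemma entry_not_anc (he : IsEntry G T u v w) : ¬ Anc T u v := by
  obtain ⟨harc, hw, hv⟩ := he
  intro hanc
  obtain ⟨p, hp, hall⟩ := loop_witness hw
  refine hv ⟨hanc, [v] ++ p, isPath_append (isPath_single v) hp harc, ?_⟩
  intro y hy
  rcases List.mem_append.mp hy with hm | hm
  · simp at hm; subst hm; exact hanc
  · exact (hall y hm).1

lemma inLoop_nested [LinearOrder V] (hanc : ∀ a b, Anc T a b → b ≤ a)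
    (hw1 : InLoop G T u' w) (hw2 : InLoop G T u w) (ha : Anc T u u') : InLoop G T u u' := by
  obtain ⟨l, hl, -, hprops, -⟩ := tree_path (G := G) (T := T) (h := fun _ => none) hanc hw1.1
  obtain ⟨r, hr, hallr⟩ := loop_witness hw2
  refine ⟨ha, l ++ r.tail, isPath_join hl hr, ?_⟩
  intro c hc
  rcases List.mem_append.mp hc with hm | hm
  · exact anc_trans ha (hprops c hm).1
  · exact (hallr c (List.mem_of_mem_tail hm)).1

lemma exists_outermost [LinearOrder V] (hanc : ∀ a b, Anc T a b → b ≤ a)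
    (ht : IsEntry G T t v w) :
    ∃ u', IsEntry G T u' v w ∧ ∀ z, IsEntry G T z v w →
      Anc T u' z ∧ InLoop G T u' z ∧ ∀ y, InLoop G T z y → InLoop G T u' y := by
  classical
  obtain ⟨l, -, -, -, hcont⟩ := tree_path (G := G) (T := T) (h := fun _ => none) hanc (anc_s (a := w))
  have hmem : ∀ z, IsEntry G T z v w → z ∈ l := fun z hz => hcont z hz.2.1.1 anc_s
  set S : Finset V := l.toFinset.filter (fun z => IsEntry G T z v w) with hS
  have htS : t ∈ S := by
    rw [hS, Finset.mem_filter, List.mem_toFinset]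
    exact ⟨hmem t ht, ht⟩
  have hne : S.Nonempty := ⟨t, htS⟩
  set u' := S.max' hne with hu'
  have hu'S : u' ∈ S := S.max'_mem hne
  have hu'e : IsEntry G T u' v w := (Finset.mem_filter.mp hu'S).2
  refine ⟨u', hu'e, ?_⟩
  intro z hz
  have hzS : z ∈ S := by
    rw [hS, Finset.mem_filter, List.mem_toFinset]; exact ⟨hmem z hz, hz⟩
  have hle : z ≤ u' := S.le_max' z hzS
  have hcomp := anc_comparable hz.2.1.1 hu'e.2.1.1
  have hancz : Anc T u' z := by
    rcases hcomp with hc | hc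
    · have : u' = z := le_antisymm (hanc z u' hc) hle
      subst this; exact anc_refl
    · exact hc
  have hzL : InLoop G T u' z := inLoop_nested hanc hz.2.1 hu'e.2.1 hancz
  exact ⟨hancz, hzL, fun y hy => inLoop_trans hzL hy⟩

end LoopAPI

section Main

variable [LinearOrder V]

lemma descend (G : FlowGraph V) (T : SpanningTree G) (h : V → Option V)
    (hanc : ∀ a b, Anc T a b → b ≤ a)
    (hsome : ∀ v u, h v = some u ↔
      (Anc T u v ∧ u ≠ v ∧ InLoop G T u v ∧
        ∀ u', Anc T u' v → u' ≠ v → InLoop G T u' v → Anc T u' u))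
    (hnone : ∀ v, h v = none ↔ ∀ u, ¬ (Anc T u v ∧ u ≠ v ∧ InLoop G T u v))
    (x t v w u₀ : V)
    (hxs : x ≠ G.s)
    (hentt : IsEntry G T t v w) (hwt : w ≠ t)
    (hent0 : IsEntry G T u₀ v w)
    (hmax : ∀ z, IsEntry G T z v w →
      Anc T u₀ z ∧ InLoop G T u₀ z ∧ ∀ y, InLoop G T z y → InLoop G T u₀ y)
    (hu0x : Anc T u₀ x) :
    ∀ n z, T.parent^[n] z = u₀ → IsEntry G T z v w → Anc T z t → Anc T x z → x ≠ z →
      ∃ q, (ramalingam G T h).IsPath q G.s t ∧ x ∉ q := by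
  intro n
  induction n using Nat.strong_induction_on with
  | _ n ih =>
  intro z hiter hentz hzt hxz hxnez
  have hznu : z ≠ u₀ := by
    rintro rfl
    exact hxnez (anc_antisymm hanc hxz hu0x)
  have hn0 : n ≠ 0 := by
    rintro rfl
    rw [Function.iterate_zero_apply] at hiter
    exact hznu hiter
  obtain ⟨z', hz'⟩ : ∃ z', h z = some z' := by
    cases hzo : h z with
    | none =>
      exact absurd ⟨(hmax z hentz).1, Ne.symm hznu, (hmax z hentz).2.1⟩ ((hnone z).mp hzo u₀)
    | some z' => exact ⟨z', rfl⟩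
  obtain ⟨hancz'z, hne, hzL, hinner⟩ := (hsome z z').mp hz'
  have hu0z' : Anc T u₀ z' := hinner u₀ (hmax z hentz).1 (Ne.symm hznu) (hmax z hentz).2.1
  have hwz' : InLoop G T z' w := inLoop_trans hzL hentz.2.1
  have hz'L : InLoop G T u₀ z' := inLoop_nested hanc hwz' hent0.2.1 hu0z'
  have hentz' : IsEntry G T z' v w :=
    ⟨hentt.1, hwz', fun hv => hent0.2.2 (inLoop_trans hz'L hv)⟩
  have hz't : Anc T z' t := anc_trans hancz'z hzt
  by_cases hcase : Anc T x z' ∧ x ≠ z'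
  · -- recurse on the next loop header
    obtain ⟨j, hj⟩ := anc_iff_iterate.mp hancz'z
    have hj0 : j ≠ 0 := by
      rintro rfl
      rw [Function.iterate_zero_apply] at hj
      exact hne hj.symm
    by_cases hjn : j ≤ n
    · have hsub : T.parent^[n - j] z' = u₀ := by
        rw [← hj, ← Function.iterate_add_apply, Nat.sub_add_cancel hjn, hiter]
      exact ih (n - j) (by omega) z' hsub hentz' hz't hcase.1 hcase.2
    · exfalso
      have hiterj : T.parent^[j - n] u₀ = z' := by
        rw [← hiter, ← Function.iterate_add_apply, Nat.sub_add_cancel (le_of_lt (not_le.mp hjn)), hj]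
      have hzu : Anc T z' u₀ := anc_iff_iterate.mpr ⟨j - n, hiterj⟩
      have : z' = u₀ := anc_antisymm hanc hzu hu0z'
      subst this
      exact hcase.2 (anc_antisymm hanc hcase.1 hu0x)
  · -- found the switch point: use the type-2 arc (parent z') → z, then tree path down
    have hz'x : Anc T z' x := by
      rcases anc_comparable hxz hancz'z with hc | hc
      · rcases not_and_or.mp hcase with hh | hh
        · exact absurd hc hh
        · rw [not_not.mp hh]; exact anc_refl
      · exact hc
    have hnpx : ¬ Anc T x (T.parent z') := by
      intro hp
      have hxz'2 : Anc T x z' := anc_trans hp anc_parent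
      have hxez' : x = z' := anc_antisymm hanc hxz'2 hz'x
      subst hxez'
      have : T.parent x = x := anc_antisymm hanc anc_parent hp
      exact hxs (parent_fix_eq_s this)
    obtain ⟨l₁, -, hl₁', hprops₁, -⟩ := tree_path (h := h) hanc (anc_s (a := T.parent z'))
    obtain ⟨l₂, -, hl₂', hprops₂, -⟩ := tree_path (h := h) hanc hzt
    have hwz : w ≠ z := by
      intro he
      have h1 : Anc T t z := he ▸ hentt.2.1.1
      have h2 : t = z := anc_antisymm hanc h1 hzt
      exact hwt (he.trans h2.symm)
    have hwz'ne : w ≠ z' := by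
      intro he
      have h1 : Anc T t z' := he ▸ hentt.2.1.1
      have h2 : t = z' := anc_antisymm hanc h1 hz't
      exact hwt (he.trans h2.symm)
    have harc2 : (ramalingam G T h).A (T.parent z') z :=
      Or.inr (Or.inl ⟨z', v, w, hz', rfl, hentz, hwz, hentz', hwz'ne⟩)
    refine ⟨l₁ ++ l₂, isPath_append hl₁' hl₂' harc2, ?_⟩
    intro hxq
    rcases List.mem_append.mp hxq with hm | hm
    · exact hnpx (hprops₁ x hm).2
    · exact hxnez (anc_antisymm hanc hxz (hprops₂ x hm).1)

end Main

section Main2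

variable [LinearOrder V]

lemma dir1 (G : FlowGraph V) (T : SpanningTree G) (h : V → Option V)
    (hanc : ∀ a b, Anc T a b → b ≤ a)
    (hsome : ∀ v u, h v = some u ↔
      (Anc T u v ∧ u ≠ v ∧ InLoop G T u v ∧
        ∀ u', Anc T u' v → u' ≠ v → InLoop G T u' v → Anc T u' u))
    (hnone : ∀ v, h v = none ↔ ∀ u, ¬ (Anc T u v ∧ u ≠ v ∧ InLoop G T u v))
    (x : V) :
    ∀ n (p : List V) (t : V), p.length ≤ n → G.IsPath p G.s t → x ∉ p →
      ∃ q, (ramalingam G T h).IsPath q G.s t ∧ x ∉ q := by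
  intro n
  induction n with
  | zero =>
    intro p t hlen hp _
    exact absurd (List.length_eq_zero_iff.mp (Nat.le_zero.mp hlen)) hp.1
  | succ n ih =>
    intro p t hlen hp hxp
    by_cases hx : Anc T x t ∧ x ≠ t
    case neg =>
      have hxt : ¬ Anc T x t := by
        rcases not_and_or.mp hx with hh | hh
        · exact hh
        · exact absurd ((not_not.mp hh) ▸ hp.last_mem) hxp
      obtain ⟨l, -, hl', hprops, -⟩ := tree_path (h := h) hanc (anc_s (a := t))
      exact ⟨l, hl', fun hm => hxt (hprops x hm).2⟩
    case pos =>
      obtain ⟨hxt, hxnet⟩ := hx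
      have hxs : x ≠ G.s := fun he => hxp (he ▸ hp.head_mem)
      have hts : t ≠ G.s := by
        intro he
        subst he
        exact hxnet (eq_s_of_anc_s hanc hxt)
      have hsL : ¬ InLoop G T t G.s := fun hL => hts (eq_s_of_anc_s hanc hL.1)
      obtain ⟨q₀, r, v, w, hsplit, hq₀, hr, harc, hnv, hallr⟩ :=
        exists_crossing (InLoop G T t) (n+1) p G.s t hlen hp hsL inLoop_self
      have hwL : InLoop G T t w := hallr w hr.head_mem
      have hentt : IsEntry G T t v w := ⟨harc, hwL, hnv⟩
      have hq0len : q₀.length ≤ n := by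
        have hl2 := congrArg List.length hsplit
        simp only [List.length_append] at hl2
        have hrne : r ≠ [] := hr.1
        have hr1 : 0 < r.length := List.length_pos_iff.mpr hrne
        omega
      have hxq₀ : x ∉ q₀ := fun hm => hxp (hsplit ▸ List.mem_append.mpr (Or.inl hm))
      obtain ⟨Q, hQ, hxQ⟩ := ih q₀ v hq0len hq₀ hxq₀
      by_cases hwt : w = t
      · subst hwt
        have harc' : (ramalingam G T h).A v w :=
          Or.inl ⟨harc, by rintro ⟨h1, -⟩; exact entry_not_anc hentt h1⟩
        refine ⟨Q ++ [w], isPath_concat hQ harc', ?_⟩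
        intro hm
        rcases List.mem_append.mp hm with hm | hm
        · exact hxQ hm
        · simp at hm; exact hxnet hm
      · obtain ⟨u₀, hent0, hmax⟩ := exists_outermost hanc hentt
        have hu0t : Anc T u₀ t := (hmax t hentt).1
        by_cases hux : Anc T u₀ x
        · obtain ⟨n₀, hn₀⟩ := anc_iff_iterate.mp hu0t
          exact descend G T h hanc hsome hnone x t v w u₀ hxs hentt hwt hent0 hmax hux
            n₀ t hn₀ hentt anc_refl hxt hxnet
        · have harc3 : (ramalingam G T h).A v u₀ :=
            Or.inr (Or.inr ⟨w, ⟨t, hentt, hwt⟩, hent0, fun u' hu' y hy => (hmax u' hu').2.2 y hy⟩)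
          obtain ⟨l, -, hl', hprops, -⟩ := tree_path (h := h) hanc hu0t
          refine ⟨Q ++ l, isPath_append hQ hl' harc3, ?_⟩
          intro hm
          rcases List.mem_append.mp hm with hm | hm
          · exact hxQ hm
          · exact hux (hprops x hm).1

lemma dir2 (G : FlowGraph V) (T : SpanningTree G) (h : V → Option V)
    (hanc : ∀ a b, Anc T a b → b ≤ a)
    (hsome : ∀ v u, h v = some u ↔
      (Anc T u v ∧ u ≠ v ∧ InLoop G T u v ∧
        ∀ u', Anc T u' v → u' ≠ v → InLoop G T u' v → Anc T u' u))
    (x : V) :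
    ∀ n (p : List V) (t : V), p.length ≤ n → (ramalingam G T h).IsPath p G.s t → x ∉ p →
      ∃ q, G.IsPath q G.s t ∧ x ∉ q := by
  intro n
  induction n with
  | zero =>
    intro p t hlen hp _
    exact absurd (List.length_eq_zero_iff.mp (Nat.le_zero.mp hlen)) hp.1
  | succ n ih =>
    intro p t hlen hp hxp
    by_cases hx : Anc T x t ∧ x ≠ t
    case neg =>
      have hxt : ¬ Anc T x t := by
        rcases not_and_or.mp hx with hh | hh
        · exact hh
        · exact absurd ((not_not.mp hh) ▸ hp.last_mem) hxp
      obtain ⟨l, hl, -, hprops, -⟩ := tree_path (h := h) hanc (anc_s (a := t))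
      exact ⟨l, hl, fun hm => hxt (hprops x hm).2⟩
    case pos =>
      obtain ⟨hxt, hxnet⟩ := hx
      have hxs : x ≠ G.s := fun he => hxp (he ▸ hp.head_mem)
      rcases Nat.lt_or_ge p.length 2 with h2 | h2
      · exfalso
        obtain ⟨hn, hh, hl, -⟩ := hp
        match p, hn with
        | [c], _ =>
          cases hh
          simp only [List.getLast?_singleton, Option.some.injEq] at hl
          exact hxs (eq_s_of_anc_s hanc (hl ▸ hxt))
        | c₁ :: c₂ :: p', _ => simp at h2
      · obtain ⟨q₀, a, hsplit, hq₀, harc⟩ := exists_last_arc hp h2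
        have hq0len : q₀.length ≤ n := by
          have hl2 := congrArg List.length hsplit
          simp only [List.length_append, List.length_singleton] at hl2
          omega
        have hxq₀ : x ∉ q₀ := fun hm => hxp (hsplit ▸ List.mem_append.mpr (Or.inl hm))
        obtain ⟨Qa, hQa, hxQa⟩ := ih q₀ a hq0len hq₀ hxq₀
        rcases harc with ⟨harcG, -⟩ | ⟨hu, v, w, hh, haeq, hentt, hwt, henthu, hwhu⟩ | ⟨w, -, hent, -⟩
        · refine ⟨Qa ++ [t], isPath_concat hQa harcG, ?_⟩
          intro hm
          rcases List.mem_append.mp hm with hm | hm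
          · exact hxQa hm
          · simp at hm; exact hxnet hm
        · obtain ⟨hanchut, hnehu, htL, -⟩ := (hsome t hu).mp hh
          by_cases hhx : Anc T hu x
          · have hnxv : ¬ Anc T x v := fun hxv => entry_not_anc henthu (anc_trans hhx hxv)
            obtain ⟨l, hlG, -, hprops, -⟩ := tree_path (h := h) hanc (anc_s (a := v))
            obtain ⟨r, hrG, hallr⟩ := loop_witness hentt.2.1
            refine ⟨l ++ r, isPath_append hlG hrG hentt.1, ?_⟩
            intro hm
            rcases List.mem_append.mp hm with hm | hm
            · exact hnxv (hprops x hm).2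
            · exact hxnet (anc_antisymm hanc hxt (hallr x hm).1)
          · have hxhu : Anc T x hu := by
              rcases anc_comparable hxt hanchut with hc | hc
              · exact hc
              · exact absurd hc hhx
            have hhus : hu ≠ G.s := by
              intro he
              exact hxs (eq_s_of_anc_s hanc (he ▸ hxhu))
            have harcG : G.A a hu := haeq ▸ T.parent_arc hu hhus
            obtain ⟨l, hlG, -, hprops, -⟩ := tree_path (h := h) hanc htL.1
            refine ⟨Qa ++ l, isPath_append hQa hlG harcG, ?_⟩
            intro hm
            rcases List.mem_append.mp hm with hm | hm
            · exact hxQa hm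
            · exact hhx (hprops x hm).1
        · obtain ⟨r, hrG, hallr⟩ := loop_witness hent.2.1
          refine ⟨Qa ++ r, isPath_append hQa hrG hent.1, ?_⟩
          intro hm
          rcases List.mem_append.mp hm with hm | hm
          · exact hxQa hm
          · exact hxnet (anc_antisymm hanc hxt (hallr x hm).1)

end Main2


/-- Ramalingam's streamlined transformation preserves the dominator relation. -/
theorem stmt16 [LinearOrder V] (G : FlowGraph V) (T : SpanningTree G)
    (hreach : ∀ v, G.Reach G.s v)
    (hanc : ∀ a b, Anc T a b → b ≤ a)
    (hint : ∀ u x y, Anc T u x → x ≤ y → y ≤ u → Anc T u y)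
    (hcross : ∀ x y, G.A x y → ¬ Anc T x y → ¬ Anc T y x → y < x)
    (h : V → Option V)
    (hsome : ∀ v u, h v = some u ↔
      (Anc T u v ∧ u ≠ v ∧ InLoop G T u v ∧
        ∀ u', Anc T u' v → u' ≠ v → InLoop G T u' v → Anc T u' u))
    (hnone : ∀ v, h v = none ↔ ∀ u, ¬ (Anc T u v ∧ u ≠ v ∧ InLoop G T u v)) :
    ∀ x y, G.Dom x y ↔ (ramalingam G T h).Dom x y := by

  intro x y
  constructor
  · intro hd p hp
    by_contra hxp
    obtain ⟨q, hq, hxq⟩ := dir2 G T h hanc hsome x p.length p y le_rfl hp hxp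
    exact hxq (hd q hq)
  · intro hd p hp
    by_contra hxp
    obtain ⟨q, hq, hxq⟩ := dir1 G T h hanc hsome hnone x p.length p y le_rfl hp hxp
    exact hxq (hd q hq)
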